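/- The sequence ζ defined by ζ(n) = ∑_{j=0}^{n-1} 1/(ρ+j) for ρ > 0 satisfies the weak-continuity condition (Δζ)(r+d)/(Δζ)(r) = (Δ^d ζ)(r+1)/(Δ^d ζ)(r) for all r ≥ 0 and d ≥ 1. -/

import Mathlib

/-- d-th order forward difference of a sequence: (Δ^d ζ)(r) = ∑_{j=0}^d (-1)^{d-j} C(d,j) ζ(r+j). -/
noncomputable def fdiff (ζ : ℕ → ℝ) (d r : ℕ) : ℝ :=
  ∑ j ∈ Finset.range (d + 1), (-1 : ℝ) ^ (d - j) * (d.choose j : ℝ) * ζ (r + j)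

lemma fdiff_eq_iter (ζ : ℕ → ℝ) (d r : ℕ) : fdiff ζ d r = (fwdDiff 1)^[d] ζ r := by
  rw [fwdDiff_iter_eq_sum_shift, fdiff]
  refine Finset.sum_congr rfl fun k _ => ?_
  simp [zsmul_eq_mul, smul_eq_mul]

lemma fdiff_succ (ζ : ℕ → ℝ) (d r : ℕ) :
    fdiff ζ (d + 1) r = fdiff ζ d (r + 1) - fdiff ζ d r := by
  simp only [fdiff_eq_iter, Function.iterate_succ_apply', fwdDiff]

theorem stmt_13 (ρ : ℝ) (hρ : 0 < ρ) (ζ : ℕ → ℝ)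
    (hζ : ∀ n, ζ n = ∑ j ∈ Finset.range n, 1 / (ρ + j)) :
    ∀ r d : ℕ, 1 ≤ d →
      fdiff ζ 1 (r + d) / fdiff ζ 1 r = fdiff ζ d (r + 1) / fdiff ζ d r := by
  set P : ℕ → ℕ → ℝ := fun d r => ∏ i ∈ Finset.range d, (ρ + r + i) with hP
  have hpos : ∀ d r, 0 < P d r := by
    intro d r
    exact Finset.prod_pos fun i _ => by positivity
  have hne : ∀ d r, P d r ≠ 0 := fun d r => (hpos d r).ne'
  have hfd1 : ∀ r : ℕ, fdiff ζ 1 r = 1 / (ρ + r) := by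
    intro r
    have h : fdiff ζ 1 r = ζ (r + 1) - ζ r := by
      simp [fdiff, Finset.sum_range_succ]; ring
    rw [h, hζ, hζ, Finset.sum_range_succ]
    ring
  have hP1 : ∀ d r : ℕ, P (d + 1) r = P d r * (ρ + r + d) := by
    intro d r; simp [hP, Finset.prod_range_succ]
  have hP2 : ∀ d r : ℕ, (ρ + r) * P d (r + 1) = P (d + 1) r := by
    intro d r
    rw [hP]
    simp only
    rw [Finset.prod_range_succ', mul_comm]
    congr 1
    · refine Finset.prod_congr rfl fun i _ => by push_cast; ring
    · push_cast; ring
  have key : ∀ d r : ℕ, fdiff ζ (d + 1) r =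
      (-1 : ℝ) ^ d * (d.factorial : ℝ) / P (d + 1) r := by
    intro d
    induction d with
    | zero =>
      intro r
      rw [hfd1]
      simp [hP, Finset.prod_range_succ]
    | succ d ih =>
      intro r
      have hr : (ρ + (r : ℝ)) ≠ 0 := by positivity
      have hrd : (ρ + (r : ℝ) + ((d : ℝ) + 1)) ≠ 0 := by positivity
      rw [fdiff_succ, ih, ih]
      have h1 : P (d + 1) (r + 1) = P (d + 2) r / (ρ + r) := by
        rw [show d + 2 = (d + 1) + 1 from rfl, ← hP2 (d + 1) r]
        field_simp
      have h2 : P (d + 1) r = P (d + 2) r / (ρ + r + ((d : ℝ) + 1)) := by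
        have := hP1 (d + 1) r
        push_cast at this
        rw [this]
        field_simp
      rw [h1, h2]
      have hPne : P (d + 2) r ≠ 0 := hne _ _
      field_simp
      rw [Nat.factorial_succ]
      push_cast
      ring
  intro r d hd
  obtain ⟨e, rfl⟩ : ∃ e, d = e + 1 := ⟨d - 1, by omega⟩
  rw [hfd1, hfd1, key]
  have hr : (ρ + (r : ℝ)) ≠ 0 := by positivity
  have hrd : (ρ + ((r : ℝ) + ((e : ℝ) + 1))) ≠ 0 := by positivity
  have hc : ((-1 : ℝ) ^ e * (e.factorial : ℝ)) ≠ 0 := by positivity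
  have hA : P (e + 1) r ≠ 0 := hne _ _
  have hB : P (e + 1) (r + 1) ≠ 0 := hne _ _
  rw [key e r]
  have lhs : (1 : ℝ) / (ρ + ((r + (e + 1) : ℕ) : ℝ)) / (1 / (ρ + r)) =
      (ρ + r) / (ρ + r + ((e : ℝ) + 1)) := by
    push_cast
    rw [div_div_div_comm, div_one, one_div_div]
    ring_nf
  have rhs : ((-1 : ℝ) ^ e * (e.factorial : ℝ) / P (e + 1) (r + 1)) /
      ((-1 : ℝ) ^ e * (e.factorial : ℝ) / P (e + 1) r) =
      P (e + 1) r / P (e + 1) (r + 1) := by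
    field_simp
  rw [lhs, rhs, div_eq_div_iff (by positivity) hB]
  have e1 := hP1 (e + 1) r
  have e2 := hP2 (e + 1) r
  push_cast at e1 e2
  linear_combination e2 + e1
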